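/- arXiv:0805.3494 — 5 statements merged into one kernel-verified Lean document; each statement's English description precedes it below -/
import Mathlib

section
/- If A is a set of non-negative real numbers satisfying the descending chain condition (every strictly decreasing sequence in A is finite), then the set A_∞ = {0} ∪ ⋃_{n≥1} {a_1 + ... + a_n : a_i ∈ A} also satisfies the descending chain condition. -/
/-- A set of reals satisfies the descending chain condition if it contains
no infinite strictly decreasing sequence. -/
def DCC (A : Set ℝ) : Prop := ∀ f : ℕ → ℝ, (∀ n, f n ∈ A) → ¬ StrictAnti f

/-- `Ainf A` is `{0}` together with all finite sums of elements of `A`. -/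
def Ainf (A : Set ℝ) : Set ℝ :=
  {0} ∪ {x | ∃ n : ℕ, 0 < n ∧ ∃ g : Fin n → ℝ, (∀ i, g i ∈ A) ∧ x = ∑ i, g i}

theorem dcc_of_sumset (A : Set ℝ) (hA : ∀ x ∈ A, (0:ℝ) ≤ x) (h : DCC A) :
    DCC (Ainf A) := by
  have hwf : A.IsWF := by
    rw [Set.isWF_iff_no_descending_seq]
    intro f hf hmem
    exact h f (fun n => hmem n) hf
  have hpwo : (AddSubmonoid.closure A : Set ℝ).IsPWO :=
    hwf.isPWO.addSubmonoid_closure hA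
  have hsub : Ainf A ⊆ (AddSubmonoid.closure A : Set ℝ) := by
    rintro x (rfl | ⟨n, hn, g, hg, rfl⟩)
    · exact (AddSubmonoid.closure A).zero_mem
    · exact AddSubmonoid.sum_mem _ fun i _ => AddSubmonoid.subset_closure (hg i)
  intro f hf hanti
  exact (Set.isWF_iff_no_descending_seq.mp (hpwo.isWF.mono hsub)) f hanti
    (fun n => hf n)
end

section
/- If A ⊆ [0,1] is a set of real numbers satisfying the descending chain condition, then the derived set A' = {(n - 1 + a)/n : n ∈ ℕ, n ≥ 1, a ∈ A_∞ ∩ [0,1]} ∪ {1} also satisfies the descending chain condition. -/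
lemma dcc_iff_isWF (A : Set ℝ) : DCC A ↔ A.IsWF := by
  rw [Set.isWF_iff_no_descending_seq]
  exact ⟨fun h f hf hmem => h f hmem hf, fun h f hmem hanti => h f hanti hmem⟩

lemma Ainf_subset_closure (A : Set ℝ) :
    Ainf A ⊆ (AddSubmonoid.closure A : Set ℝ) := by
  rintro x (hx | ⟨n, hn, g, hg, rfl⟩)
  · subst hx
    exact zero_mem _
  · exact sum_mem fun i _ => AddSubmonoid.subset_closure (hg i)

theorem dcc_of_derived (A : Set ℝ) (hA : A ⊆ Set.Icc 0 1) (h : DCC A) :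
    DCC ({x | ∃ n : ℕ, 1 ≤ n ∧ ∃ a ∈ Ainf A ∩ Set.Icc 0 1,
            x = ((n : ℝ) - 1 + a) / n} ∪ {1}) := by
  have hAwf : A.IsWF := (dcc_iff_isWF A).mp h
  have hclos : (AddSubmonoid.closure A : Set ℝ).IsPWO :=
    Set.IsPWO.addSubmonoid_closure (fun x hx => (hA hx).1) hAwf.isPWO
  set B : Set ℝ := Ainf A ∩ Set.Icc 0 1 with hBdef
  have hB : B.IsPWO :=
    hclos.mono (Set.inter_subset_left.trans (Ainf_subset_closure A))
  intro f hf hanti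
  -- every element of the set is ≤ 1
  have hle1 : ∀ x ∈ ({x | ∃ n : ℕ, 1 ≤ n ∧ ∃ a ∈ Ainf A ∩ Set.Icc 0 1,
      x = ((n : ℝ) - 1 + a) / n} ∪ {1} : Set ℝ), x ≤ 1 := by
    rintro x (⟨n, hn, a, ⟨_, _, ha1⟩, rfl⟩ | hx)
    · have hn' : (0:ℝ) < n := by exact_mod_cast hn
      rw [div_le_one hn']
      linarith
    · simp only [Set.mem_singleton_iff] at hx; simp [hx]
  have hf1 : f 1 < 1 := lt_of_lt_of_le (hanti one_pos) (hle1 _ (hf 0))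
  set c : ℝ := 1 - f 1 with hc
  have hc0 : 0 < c := by simp [hc]; linarith
  set M : ℕ := ⌈1 / c⌉₊ with hM
  -- the tail of f lies in a finite union of images of B
  set T : Set ℝ := (Finset.Icc 1 M).sup
      (fun n : ℕ => (fun a : ℝ => ((n : ℝ) - 1 + a) / n) '' B) with hT
  have hTwf : T.IsWF := by
    rw [hT, Finset.isWF_sup]
    intro n hn
    have hn1 : 1 ≤ n := (Finset.mem_Icc.mp hn).1
    have hn' : (0:ℝ) < n := by exact_mod_cast hn1
    refine (hB.image_of_monotone ?_).isWF
    intro a b hab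
    show ((n:ℝ) - 1 + a) / n ≤ ((n:ℝ) - 1 + b) / n
    gcongr
  have hmem : ∀ k : ℕ, f (k + 1) ∈ T := by
    intro k
    have hk1 : f (k + 1) ≤ f 1 := hanti.antitone (by omega)
    have hk1' : f (k + 1) < 1 := lt_of_le_of_lt hk1 hf1
    rcases hf (k + 1) with hx | hx
    · obtain ⟨n, hn1, a, haB, heq⟩ := hx
      have hn' : (0:ℝ) < n := by exact_mod_cast hn1
      have ha0 : 0 ≤ a := haB.2.1
      -- f (k+1) ≥ 1 - 1/n
      have hge : 1 - 1 / (n:ℝ) ≤ f (k + 1) := by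
        rw [heq, le_div_iff₀ hn']
        have hx : (1 - 1/(n:ℝ)) * n = n - 1 := by field_simp
        rw [hx]; linarith
      have hcn : c ≤ 1 / (n:ℝ) := by linarith
      have hnM : n ≤ M := by
        have h1 : (n:ℝ) ≤ 1 / c := by
          rw [le_div_iff₀ hc0]
          calc (n:ℝ) * c ≤ (n:ℝ) * (1/(n:ℝ)) := by
                exact mul_le_mul_of_nonneg_left hcn (le_of_lt hn')
            _ = 1 := by field_simp
        calc n = ⌈(n:ℝ)⌉₊ := by simp
          _ ≤ ⌈1/c⌉₊ := Nat.ceil_le_ceil h1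
      rw [hT, Finset.sup_set_eq_biUnion]
      exact Set.mem_biUnion (Finset.mem_Icc.mpr ⟨hn1, hnM⟩) ⟨a, haB, heq.symm⟩
    · simp only [Set.mem_singleton_iff] at hx
      exact absurd hx (ne_of_lt hk1')
  have hanti' : StrictAnti (fun k : ℕ => f (k + 1)) :=
    fun a b hab => hanti (by omega)
  exact Set.isWF_iff_no_descending_seq.mp hTwf _ hanti' hmem
end

section
/- Let A ⊆ (0,1) be a set of rational numbers satisfying the descending chain condition. Then there exists a positive integer N = N(A) such that for every finite collection a_1, ..., a_n of elements of A with a_1 + ... + a_n > 2, one has -2N + Σ_{i=1}^n ⌊N a_i⌋ > 0. -/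
/-- Trimming lemma: from a finite family of reals each `< 1` with sum `> 2`,
one can extract a subfamily with sum in `(2, 3]`. -/
lemma trim_lemma {ι : Type*} [DecidableEq ι] (a : ι → ℝ) (ha1 : ∀ i, a i < 1) :
    ∀ s : Finset ι, 2 < ∑ i ∈ s, a i →
      ∃ t ⊆ s, 2 < ∑ i ∈ t, a i ∧ ∑ i ∈ t, a i ≤ 3 := by
  intro s
  induction s using Finset.strongInduction with
  | _ s ih =>
    intro hs
    by_cases h3 : ∑ i ∈ s, a i ≤ 3
    · exact ⟨s, Finset.Subset.refl s, hs, h3⟩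
    · push_neg at h3
      have hne : s.Nonempty := by
        rw [Finset.nonempty_iff_ne_empty]
        rintro rfl
        simp only [Finset.sum_empty] at hs
        linarith
      obtain ⟨i, hi⟩ := hne
      have hsum : ∑ j ∈ s.erase i, a j = (∑ j ∈ s, a j) - a i :=
        Finset.sum_erase_eq_sub hi
      have h2 : 2 < ∑ j ∈ s.erase i, a j := by
        have := ha1 i; rw [hsum]; linarith
      obtain ⟨t, hts, ht⟩ := ih (s.erase i) (Finset.erase_ssubset hi) h2
      exact ⟨t, hts.trans (Finset.erase_subset i s), ht⟩

theorem exists_N_round_down (A : Set ℝ) (hA : A ⊆ Set.Ioo 0 1)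
    (hQ : ∀ x ∈ A, ∃ q : ℚ, x = (q : ℝ)) (h : DCC A) :
    ∃ N : ℕ, 0 < N ∧ ∀ (n : ℕ) (a : Fin n → ℝ), (∀ i, a i ∈ A) →
      2 < ∑ i, a i → 0 < -2 * (N : ℤ) + ∑ i, ⌊(N : ℝ) * a i⌋ := by
  classical
  rcases A.eq_empty_or_nonempty with rfl | hAne
  · refine ⟨1, one_pos, fun n a ha hsum => ?_⟩
    rcases Nat.eq_zero_or_pos n with rfl | hn
    · simp only [Finset.univ_eq_empty, Finset.sum_empty] at hsum; linarith
    · exact absurd (ha ⟨0, hn⟩) (Set.notMem_empty _)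
  -- A is well-founded under <
  have hWF : A.IsWF := by
    rw [Set.isWF_iff_no_descending_seq]
    intro f hf hmem
    exact h f (fun k => hmem k) hf
  -- minimum element of A
  have hm : hWF.min hAne ∈ A := hWF.min_mem hAne
  set m : ℝ := hWF.min hAne with hmdef
  have hm0 : 0 < m := (hA hm).1
  have hmle : ∀ x ∈ A, m ≤ x := fun x hx => hWF.min_le hAne hx
  -- finite sums of elements of A form a well-founded set
  have hPWO : (AddSubmonoid.closure A : Set ℝ).IsPWO :=
    Set.IsPWO.addSubmonoid_closure (fun x hx => (hA hx).1.le)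
      (Set.isPWO_iff_isWF.mpr hWF)
  have hTWF : ((AddSubmonoid.closure A : Set ℝ) ∩ Set.Ioi 2).IsWF :=
    (hPWO.mono Set.inter_subset_left).isWF
  -- gap δ above 2
  obtain ⟨δ, hδ0, hδ⟩ : ∃ δ : ℝ, 0 < δ ∧
      ∀ x ∈ (AddSubmonoid.closure A : Set ℝ), 2 < x → 2 + δ ≤ x := by
    rcases ((AddSubmonoid.closure A : Set ℝ) ∩ Set.Ioi 2).eq_empty_or_nonempty with hT | hT
    · refine ⟨1, one_pos, fun x hx h2 => ?_⟩
      have hmem : x ∈ (↑(AddSubmonoid.closure A) : Set ℝ) ∩ Set.Ioi 2 := ⟨hx, h2⟩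
      rw [hT] at hmem
      exact absurd hmem (Set.notMem_empty x)
    · refine ⟨hTWF.min hT - 2, ?_, fun x hx h2 => ?_⟩
      · have := hTWF.min_mem hT
        have h2' : (2 : ℝ) < hTWF.min hT := this.2
        linarith
      · have := hTWF.min_le hT (Set.mem_inter hx h2)
        linarith
  -- choose N
  refine ⟨⌈3 / (m * δ)⌉₊ + 1, Nat.succ_pos _, fun n a ha hsum => ?_⟩
  set N : ℕ := ⌈3 / (m * δ)⌉₊ + 1 with hNdef
  have hN1 : 3 / (m * δ) < (N : ℝ) := by
    calc 3 / (m * δ) ≤ (⌈3 / (m * δ)⌉₊ : ℝ) := Nat.le_ceil _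
    _ < (N : ℝ) := by rw [hNdef]; push_cast; linarith
  have hN3 : 3 < (N : ℝ) * (m * δ) := by
    rw [div_lt_iff₀ (by positivity)] at hN1
    linarith
  have hN0 : (0 : ℝ) ≤ (N : ℝ) := Nat.cast_nonneg _
  -- trim
  obtain ⟨t, -, htS, htS3⟩ :=
    trim_lemma a (fun i => (hA (ha i)).2) Finset.univ hsum
  have htne : t.Nonempty := by
    rw [Finset.nonempty_iff_ne_empty]
    rintro rfl
    simp only [Finset.sum_empty] at htS
    linarith
  -- card bound
  have hcard : (t.card : ℝ) * m ≤ 3 := by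
    have : t.card • m ≤ ∑ i ∈ t, a i :=
      Finset.card_nsmul_le_sum t a m (fun i _ => hmle _ (ha i))
    rw [nsmul_eq_mul] at this
    linarith
  -- sum over t is in the closure, hence ≥ 2 + δ
  have hSmem : (∑ i ∈ t, a i) ∈ (AddSubmonoid.closure A : Set ℝ) :=
    AddSubmonoid.sum_mem _ (fun i _ => AddSubmonoid.subset_closure (ha i))
  have hSδ : 2 + δ ≤ ∑ i ∈ t, a i := hδ _ hSmem htS
  -- floors are nonnegative
  have hfl0 : ∀ i : Fin n, (0 : ℤ) ≤ ⌊(N : ℝ) * a i⌋ := fun i =>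
    Int.floor_nonneg.2 (by have := (hA (ha i)).1; positivity)
  -- sum over univ ≥ sum over t
  have hmono : ∑ i ∈ t, ⌊(N : ℝ) * a i⌋ ≤ ∑ i, ⌊(N : ℝ) * a i⌋ :=
    Finset.sum_le_sum_of_subset_of_nonneg (Finset.subset_univ t)
      (fun i _ _ => hfl0 i)
  -- floor bound over t
  have hflsum : (N : ℝ) * (∑ i ∈ t, a i) - t.card <
      ((∑ i ∈ t, ⌊(N : ℝ) * a i⌋ : ℤ) : ℝ) := by
    have := Finset.sum_lt_sum_of_nonempty htne
      (f := fun i => (N : ℝ) * a i - 1)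
      (g := fun i => ((⌊(N : ℝ) * a i⌋ : ℤ) : ℝ))
      (fun i _ => Int.sub_one_lt_floor _)
    push_cast
    push_cast at this
    rw [Finset.sum_sub_distrib] at this
    rw [← Finset.mul_sum] at this
    simpa using this
  -- key inequality in ℝ
  have hkey : 2 * (N : ℝ) < ((∑ i, ⌊(N : ℝ) * a i⌋ : ℤ) : ℝ) := by
    have h1 : (N : ℝ) * (2 + δ) ≤ (N : ℝ) * (∑ i ∈ t, a i) :=
      mul_le_mul_of_nonneg_left hSδ hN0
    have h2 : ((∑ i ∈ t, ⌊(N : ℝ) * a i⌋ : ℤ) : ℝ) ≤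
        ((∑ i, ⌊(N : ℝ) * a i⌋ : ℤ) : ℝ) := by exact_mod_cast hmono
    -- N * δ > t.card : since N * m * δ > 3 ≥ t.card * m and m > 0
    have h3 : (t.card : ℝ) < (N : ℝ) * δ := by
      have : (t.card : ℝ) * m < (N : ℝ) * δ * m := by nlinarith
      exact lt_of_mul_lt_mul_right this hm0.le
    nlinarith
  have hkey' : 2 * (N : ℤ) < ∑ i, ⌊(N : ℝ) * a i⌋ := by exact_mod_cast hkey
  linarith
end

section
/- Let A ⊆ ℝ_{>0} be a DCC set and t > 0. Then inf(A_∞ ∩ (t, ∞)) > t, provided A_∞ ∩ (t,∞) is nonempty. In particular for a DCC set A ⊆ (0,1), the quantity inf(A_∞ ∩ (2,∞)) - 2 is strictly positive. -/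
theorem sInf_gt (A : Set ℝ) (hA : A ⊆ Set.Ioi 0) (h : DCC A) (t : ℝ)
    (ht : 0 < t) (hne : (Ainf A ∩ Set.Ioi t).Nonempty) :
    t < sInf (Ainf A ∩ Set.Ioi t) := by
  -- A is well-founded
  have hwf : A.IsWF := by
    rw [Set.isWF_iff_no_descending_seq]
    intro f hf hmem
    exact h f (fun n => hmem n) hf
  have hpwo : A.IsPWO := hwf.isPWO
  have hcl : (AddSubmonoid.closure A : Set ℝ).IsPWO :=
    hpwo.addSubmonoid_closure (fun x hx => le_of_lt (hA hx))
  -- Ainf A ⊆ closure A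
  have hsub : Ainf A ⊆ (AddSubmonoid.closure A : Set ℝ) := by
    rintro x (hx | ⟨n, hn, g, hg, rfl⟩)
    · simp only [Set.mem_singleton_iff] at hx
      exact hx ▸ (AddSubmonoid.closure A).zero_mem
    · exact AddSubmonoid.sum_mem _ fun i _ => AddSubmonoid.subset_closure (hg i)
  have hS : (Ainf A ∩ Set.Ioi t).IsWF :=
    (hcl.isWF.mono (Set.inter_subset_left.trans hsub))
  set m := hS.min hne with hmdef
  have hmS := hS.min_mem hne
  have hm : ∀ x ∈ Ainf A ∩ Set.Ioi t, m ≤ x := fun x hx => not_lt.1 (hS.not_lt_min hne hx)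
  calc t < m := hmS.2
    _ ≤ sInf (Ainf A ∩ Set.Ioi t) := le_csInf hne hm
end

section
/- Let F = ℙ¹ and let Δ be an effective ℚ-divisor on F with ⌊Δ⌋ = 0 and K_F + Δ ∼_ℚ 0 (i.e., deg Δ = 2). Let m be a positive integer with mΔ integral. Then Σ_{i=0}^{m-1} h^0(F, ω_F^{1-i}(-⌊iΔ⌋)) ≤ (m-1)². In other words, Σ_{i=0}^{m-1} h^0(ℙ¹, O(2i - 2 - deg⌊iΔ⌋)) ≤ (m-1)². -/
lemma sum_max_aux : ∀ m : ℕ, 1 ≤ m →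
    ∑ i ∈ Finset.range m, max 0 (2 * (i : ℤ) - 1) = ((m : ℤ) - 1) ^ 2 := by
  intro m hm
  induction m, hm using Nat.le_induction with
  | base => simp
  | succ n hn ih =>
    rw [Finset.sum_range_succ, ih]
    have h1 : (1:ℤ) ≤ (n:ℤ) := by exact_mod_cast hn
    have h2 : max 0 (2 * (n : ℤ) - 1) = 2 * (n : ℤ) - 1 := by
      rw [max_eq_right]; linarith
    rw [h2]
    push_cast
    ring

theorem genus_bound_cyclic_cover (m r : ℕ) (hm : 1 ≤ m) (d : Fin r → ℝ)
    (hd : ∀ j, d j ∈ Set.Ioo (0:ℝ) 1) (hsum : ∑ j, d j = 2)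
    (hint : ∀ j, ∃ z : ℤ, (m : ℝ) * d j = (z : ℝ)) :
    ∑ i ∈ Finset.range m,
        max 0 (2 * (i : ℤ) - 1 - ∑ j, ⌊(i : ℝ) * d j⌋) ≤ ((m : ℤ) - 1) ^ 2 := by
  calc ∑ i ∈ Finset.range m, max 0 (2 * (i : ℤ) - 1 - ∑ j, ⌊(i : ℝ) * d j⌋)
      ≤ ∑ i ∈ Finset.range m, max 0 (2 * (i : ℤ) - 1) := by
        apply Finset.sum_le_sum
        intro i _
        apply max_le_max le_rfl
        have h : (0:ℤ) ≤ ∑ j, ⌊(i : ℝ) * d j⌋ :=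
          Finset.sum_nonneg fun j _ =>
            Int.floor_nonneg.2 (mul_nonneg (Nat.cast_nonneg i) (hd j).1.le)
        linarith
    _ = ((m : ℤ) - 1) ^ 2 := sum_max_aux m hm
end
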